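/- For s = σ + iτ complex with σ < 0 and s not an integer, |Γ_ℝ(1-s)/Γ_ℝ(s)| ≥ √2 · ((2π)^{σ-1/2}/√π) · Γ(1-σ) · |tanh(πτ/2)|, where Γ_ℝ(s) = π^{-s/2} Γ(s/2). -/

import Mathlib

open Real Complex Filter

/-- `Γ_ℝ(s) = π^{-s/2} Γ(s/2)`. -/
noncomputable def GammaR (s : ℂ) : ℂ := (Real.pi : ℂ) ^ (-s / 2) * Complex.Gamma (s / 2)

/-- `Γ_ℂ(s) = 2 (2π)^{-s} Γ(s)`. -/
noncomputable def GammaC (s : ℂ) : ℂ := 2 * (2 * Real.pi : ℂ) ^ (-s) * Complex.Gamma s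

/-- `γ_ℝ(s) = |Γ_ℝ(1-s)/Γ_ℝ(s)|`. -/
noncomputable def gammaRFactor (s : ℂ) : ℝ := ‖GammaR (1 - s) / GammaR s‖

/-- `γ_ℂ(s) = |Γ_ℂ(1-s)/Γ_ℂ(s)|^{1/2}`. -/
noncomputable def gammaCFactor (s : ℂ) : ℝ := Real.sqrt (‖GammaC (1 - s) / GammaC s‖)

/-- `Γ_m(s) = min {γ_ℝ(s), γ_ℂ(s)}`. -/
noncomputable def GammaMin (s : ℂ) : ℝ := min (gammaRFactor s) (gammaCFactor s)

-- abs of GammaSeq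
lemma abs_gammaSeq (x t : ℝ) (n : ℕ) (hn : n ≠ 0) :
    ‖Complex.GammaSeq (x + t * I) n‖
      = (n : ℝ) ^ x * (Nat.factorial n : ℝ) / ∏ j ∈ Finset.range (n + 1), Real.sqrt ((x + j) ^ 2 + t ^ 2) := by
  rw [Complex.GammaSeq, norm_div, norm_mul, norm_prod]
  have h0 : (0:ℝ) < n := by positivity
  have h1 : ‖(n : ℂ) ^ (↑x + ↑t * I)‖ = (n : ℝ) ^ x := by
    rw [← Complex.ofReal_natCast, Complex.norm_cpow_eq_rpow_re_of_pos h0]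
    simp
  have h2 : ∀ j ∈ Finset.range (n + 1),
      ‖↑x + ↑t * I + (j : ℂ)‖ = Real.sqrt ((x + j) ^ 2 + t ^ 2) := by
    intro j _
    have : (↑x + ↑t * I + (j : ℂ)) = ((x + j : ℝ) : ℂ) + (t : ℝ) * I := by push_cast; ring
    rw [this, Complex.norm_def, Complex.normSq_add_mul_I]
  rw [h1, Finset.prod_congr rfl h2]
  simp

lemma abs_Gamma_half (t : ℝ) :
    ‖Complex.Gamma (1/2 + t * I)‖ = Real.sqrt (π / Real.cosh (π * t)) := by
  have h := Complex.Gamma_mul_Gamma_one_sub (1/2 + t * I)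
  have hc : (1 : ℂ) - (1/2 + t * I) = (starRingEnd ℂ) (1/2 + t * I) := by
    simp [Complex.ext_iff]; norm_num
  rw [hc, Complex.Gamma_conj, Complex.mul_conj] at h
  have hsin : Complex.sin (↑π * (1/2 + ↑t * I)) = (Real.cosh (π * t) : ℂ) := by
    rw [mul_add, Complex.sin_add]
    have h2 : (↑π : ℂ) * (1/2) = (↑π / 2 : ℂ) := by ring
    have h3 : (↑π : ℂ) * (↑t * I) = (↑(π*t) : ℂ) * I := by push_cast; ring
    rw [h2, h3, Complex.cos_mul_I, Complex.sin_pi_div_two, Complex.cos_pi_div_two,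
      Complex.ofReal_cosh]
    ring
  rw [hsin] at h
  have hns : Complex.normSq (Complex.Gamma (1/2 + t * I)) = π / Real.cosh (π * t) := by
    rw [← Complex.ofReal_div] at h
    exact_mod_cast h
  rw [Complex.norm_def, hns]

lemma gamma_mul_le (a t : ℝ) (ha : 1/2 ≤ a) :
    Real.Gamma a * ‖Complex.Gamma (((1/2 : ℝ) : ℂ) + t * I)‖
      ≤ ‖Complex.Gamma ((a : ℂ) + t * I)‖ * Real.Gamma (1/2) := by
  have ha0 : (0:ℝ) < a := lt_of_lt_of_le (by norm_num) ha
  have hA := Real.GammaSeq_tendsto_Gamma a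
  have hH := Real.GammaSeq_tendsto_Gamma (1/2 : ℝ)
  have hB := (continuous_norm.tendsto _).comp
    (Complex.GammaSeq_tendsto_Gamma (((1/2 : ℝ) : ℂ) + t * I))
  have hC := (continuous_norm.tendsto _).comp
    (Complex.GammaSeq_tendsto_Gamma ((a : ℂ) + t * I))
  refine le_of_tendsto_of_tendsto (hA.mul hB) (hC.mul hH) ?_
  filter_upwards [eventually_ne_atTop 0] with n hn
  have key : ∀ x : ℝ, 0 < x → ∀ j ∈ Finset.range (n+1), (0:ℝ) < x + j := by
    intro x hx j _; positivity
  rw [Function.comp_apply, Function.comp_apply, abs_gammaSeq _ _ _ hn, abs_gammaSeq _ _ _ hn,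
    Real.GammaSeq, Real.GammaSeq]
  have hPa : (0:ℝ) < ∏ j ∈ Finset.range (n+1), (a + j) :=
    Finset.prod_pos (key a ha0)
  have hPh : (0:ℝ) < ∏ j ∈ Finset.range (n+1), ((1:ℝ)/2 + j) :=
    Finset.prod_pos (key _ (by norm_num))
  have hQa : (0:ℝ) < ∏ j ∈ Finset.range (n+1), Real.sqrt ((a + j) ^ 2 + t ^ 2) := by
    apply Finset.prod_pos; intro j hj
    have := key a ha0 j hj; positivity
  have hQh : (0:ℝ) < ∏ j ∈ Finset.range (n+1), Real.sqrt (((1:ℝ)/2 + j) ^ 2 + t ^ 2) := by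
    apply Finset.prod_pos; intro j hj
    have := key _ (by norm_num : (0:ℝ) < 1/2) j hj; positivity
  rw [div_mul_div_comm, div_mul_div_comm]
  have hnum : (0:ℝ) ≤ (n:ℝ) ^ a * (Nat.factorial n : ℝ) * ((n:ℝ) ^ ((1:ℝ)/2) * (Nat.factorial n : ℝ)) := by
    positivity
  have hden : (∏ j ∈ Finset.range (n+1), Real.sqrt ((a + j) ^ 2 + t ^ 2)) *
        ∏ j ∈ Finset.range (n+1), ((1:ℝ)/2 + j)
      ≤ (∏ j ∈ Finset.range (n+1), (a + j)) *
        ∏ j ∈ Finset.range (n+1), Real.sqrt (((1:ℝ)/2 + j) ^ 2 + t ^ 2) := by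
    rw [← Finset.prod_mul_distrib, ← Finset.prod_mul_distrib]
    apply Finset.prod_le_prod
    · intro j hj
      have h1 := key _ (by norm_num : (0:ℝ) < 1/2) j hj
      positivity
    · intro j hj
      have h1 := key _ (by norm_num : (0:ℝ) < 1/2) j hj
      have h2 : (1:ℝ)/2 + j ≤ a + j := by linarith
      calc Real.sqrt ((a + j) ^ 2 + t ^ 2) * ((1:ℝ)/2 + j)
          = Real.sqrt (((a + j) ^ 2 + t ^ 2) * ((1:ℝ)/2 + j) ^ 2) := by
            rw [Real.sqrt_mul (by positivity), Real.sqrt_sq h1.le]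
        _ ≤ Real.sqrt ((a + j) ^ 2 * (((1:ℝ)/2 + j) ^ 2 + t ^ 2)) := by
            apply Real.sqrt_le_sqrt
            have h3 : ((1:ℝ)/2 + j)^2 ≤ (a + j)^2 := by nlinarith
            nlinarith [mul_le_mul_of_nonneg_left h3 (sq_nonneg t)]
        _ = (a + j) * Real.sqrt (((1:ℝ)/2 + j) ^ 2 + t ^ 2) := by
            rw [Real.sqrt_mul (by positivity), Real.sqrt_sq (by linarith)]
  exact div_le_div_of_nonneg_left hnum (mul_pos hQa hPh) hden

lemma abs_Gamma_lower (a t : ℝ) (ha : 1/2 ≤ a) :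
    Real.Gamma a / Real.sqrt (Real.cosh (π * t))
      ≤ ‖Complex.Gamma ((a : ℂ) + t * I)‖ := by
  have h := gamma_mul_le a t ha
  have h12 : (((1/2 : ℝ) : ℂ)) = (1/2 : ℂ) := by norm_num
  rw [h12, abs_Gamma_half, Real.Gamma_one_half_eq] at h
  have hcosh : (0:ℝ) < Real.cosh (π * t) := Real.cosh_pos _
  have hπ : (0:ℝ) < π := Real.pi_pos
  rw [Real.sqrt_div hπ.le] at h
  have h2 : Real.Gamma a * (Real.sqrt π / Real.sqrt (Real.cosh (π * t)))
      = (Real.Gamma a / Real.sqrt (Real.cosh (π * t))) * Real.sqrt π := by ring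
  rw [h2] at h
  exact le_of_mul_le_mul_right h (Real.sqrt_pos.mpr hπ)

lemma abs_sin_ge (x y : ℝ) :
    |Real.sinh y| ≤ ‖Complex.sin ((x : ℂ) + (y : ℝ) * I)‖ := by
  rw [Complex.sin_add_mul_I]
  have : (Complex.sin x * Complex.cosh y + Complex.cos x * Complex.sinh y * I)
      = ((Real.sin x * Real.cosh y : ℝ) : ℂ) + ((Real.cos x * Real.sinh y : ℝ)) * I := by
    push_cast; ring
  rw [this, Complex.norm_def, Complex.normSq_add_mul_I]
  rw [← Real.sqrt_sq_eq_abs]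
  apply Real.sqrt_le_sqrt
  nlinarith [Real.sin_sq_add_cos_sq x, Real.cosh_sq y, sq_nonneg (Real.sin x), sq_nonneg (Real.sinh y), sq_nonneg (Real.sin x * Real.sinh y)]

/-- For `s = σ + iτ` with `σ < 0` and `s` not an integer,
`γ_ℝ(s) ≥ √2 · (2π)^{σ-1/2}/√π · Γ(1-σ) · |tanh(πτ/2)|`. -/
theorem gammaRFactor_lower_bound (σ τ : ℝ) (hσ : σ < 0)
    (hs : ∀ n : ℤ, (σ + τ * Complex.I : ℂ) ≠ (n : ℂ)) :
    Real.sqrt 2 * ((2 * Real.pi) ^ (σ - 1/2) / Real.sqrt Real.pi) * Real.Gamma (1 - σ) *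
        |Real.tanh (Real.pi * τ / 2)| ≤
      gammaRFactor (σ + τ * Complex.I) := by
  have hπ : (0:ℝ) < π := Real.pi_pos
  set s : ℂ := (σ : ℂ) + τ * I with hs_def
  -- nonvanishing of sin
  have hsin_ne : Complex.sin (↑π * (s / 2)) ≠ 0 := by
    intro h
    rw [Complex.sin_eq_zero_iff] at h
    obtain ⟨k, hk⟩ := h
    have hπC : (↑π : ℂ) ≠ 0 := Complex.ofReal_ne_zero.mpr hπ.ne'
    have h2 : (s / 2 : ℂ) = (k : ℂ) := mul_left_cancel₀ hπC (hk.trans (mul_comm _ _))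
    refine hs (2 * k) ?_
    push_cast
    rw [show ((2:ℂ) * k) = 2 * (s/2) by rw [h2]]
    ring
  -- Gamma (s/2) ≠ 0
  have hG_ne : Complex.Gamma (s / 2) ≠ 0 := by
    apply Complex.Gamma_ne_zero
    intro m hm
    refine hs (-(2 * m)) ?_
    push_cast
    rw [show (-(2 * (m:ℂ))) = 2 * -(m:ℂ) by ring, ← hm]
    ring
  -- the three abs quantities
  set A := ‖Complex.Gamma ((1 - s) / 2)‖ with hA_def
  set B := ‖Complex.Gamma (1 - s / 2)‖ with hB_def
  set S := ‖Complex.sin (↑π * (s / 2))‖ with hS_def2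
  set G := ‖Complex.Gamma (s / 2)‖ with hG_def
  have hS_pos : 0 < S := by
    rw [hS_def2]; exact norm_pos_iff.mpr hsin_ne
  have hG_pos : 0 < G := by
    rw [hG_def]; exact norm_pos_iff.mpr hG_ne
  have hB_pos : 0 < B := by
    rw [hB_def, show (1 : ℂ) - s / 2 = ((1 - σ / 2 : ℝ) : ℂ) + ((-(τ / 2) : ℝ)) * I by
      rw [hs_def]; push_cast; ring]
    apply norm_pos_iff.mpr
    apply Complex.Gamma_ne_zero_of_re_pos
    simp
    linarith
  have hA_pos : 0 < A := by
    rw [hA_def, show (1 - s) / 2 = (((1 - σ) / 2 : ℝ) : ℂ) + ((-(τ / 2) : ℝ)) * I by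
      rw [hs_def]; push_cast; ring]
    apply norm_pos_iff.mpr
    apply Complex.Gamma_ne_zero_of_re_pos
    simp
    linarith
  -- reflection, in absolute values
  have habs : G * B = π / S := by
    have hrefl := Complex.Gamma_mul_Gamma_one_sub (s / 2)
    have h := congrArg norm hrefl
    rwa [norm_mul, norm_div, Complex.norm_real, Real.norm_eq_abs, abs_of_pos hπ, ← hG_def, ← hB_def, ← hS_def2] at h
  have hG_eq : G = π / (S * B) := by
    rw [eq_div_iff (by positivity)]
    rw [eq_div_iff hS_pos.ne'] at habs
    linear_combination habs
  -- lower bounds for A, B, S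
  set c := Real.cosh (π * τ / 2) with hc_def
  have hc_pos : 0 < c := Real.cosh_pos _
  have hcosh_neg : Real.cosh (π * (-(τ / 2))) = c := by
    rw [show π * (-(τ / 2)) = -(π * τ / 2) by ring, Real.cosh_neg]
  have hA_lb : Real.Gamma ((1 - σ) / 2) / Real.sqrt c ≤ A := by
    rw [hA_def, show (1 - s) / 2 = (((1 - σ) / 2 : ℝ) : ℂ) + ((-(τ / 2) : ℝ)) * I by
      rw [hs_def]; push_cast; ring]
    rw [← hcosh_neg]
    exact abs_Gamma_lower _ _ (by linarith)
  have hB_lb : Real.Gamma (1 - σ / 2) / Real.sqrt c ≤ B := by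
    rw [hB_def, show (1 : ℂ) - s / 2 = ((1 - σ / 2 : ℝ) : ℂ) + ((-(τ / 2) : ℝ)) * I by
      rw [hs_def]; push_cast; ring]
    rw [← hcosh_neg]
    exact abs_Gamma_lower _ _ (by linarith)
  have hS_lb : |Real.sinh (π * τ / 2)| ≤ S := by
    rw [hS_def2, show (↑π : ℂ) * (s / 2) = ((π * σ / 2 : ℝ) : ℂ) + ((π * τ / 2 : ℝ)) * I by
      rw [hs_def]; push_cast; ring]
    exact abs_sin_ge _ _
  -- Legendre duplication
  have hLeg : Real.Gamma ((1 - σ) / 2) * Real.Gamma (1 - σ / 2)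
      = Real.Gamma (1 - σ) * (2 : ℝ) ^ σ * Real.sqrt π := by
    have h := Real.Gamma_mul_Gamma_add_half ((1 - σ) / 2)
    rw [show (1 - σ) / 2 + 1 / 2 = 1 - σ / 2 by ring, show 1 - 2 * ((1 - σ) / 2) = σ by ring,
      show 2 * ((1 - σ) / 2) = 1 - σ by ring] at h
    exact h
  have htanh : |Real.tanh (π * τ / 2)| = |Real.sinh (π * τ / 2)| / c := by
    rw [Real.tanh_eq_sinh_div_cosh, abs_div, abs_of_pos hc_pos]
  -- main product bound
  have hΓA_pos : 0 < Real.Gamma ((1 - σ) / 2) := Real.Gamma_pos_of_pos (by linarith)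
  have hΓB_pos : 0 < Real.Gamma (1 - σ / 2) := Real.Gamma_pos_of_pos (by linarith)
  have hprod : (2 : ℝ) ^ σ * Real.sqrt π * Real.Gamma (1 - σ) * |Real.tanh (π * τ / 2)|
      ≤ A * B * S := by
    have hsc : Real.sqrt c * Real.sqrt c = c := Real.mul_self_sqrt hc_pos.le
    calc (2 : ℝ) ^ σ * Real.sqrt π * Real.Gamma (1 - σ) * |Real.tanh (π * τ / 2)|
        = (Real.Gamma ((1 - σ) / 2) / Real.sqrt c) * (Real.Gamma (1 - σ / 2) / Real.sqrt c)
            * |Real.sinh (π * τ / 2)| := by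
          rw [htanh, div_mul_div_comm, hsc, hLeg]
          ring
      _ ≤ A * B * S := by
          have h1 : (0:ℝ) ≤ Real.Gamma ((1 - σ) / 2) / Real.sqrt c := by positivity
          have h2 : (0:ℝ) ≤ Real.Gamma (1 - σ / 2) / Real.sqrt c := by positivity
          gcongr
  -- unfold gammaRFactor
  have hre1 : (-(1 - s) / 2).re = (σ - 1) / 2 := by rw [hs_def]; simp; try ring
  have hre2 : (-s / 2).re = -(σ / 2) := by rw [hs_def]; simp; try ring
  have hgr : gammaRFactor s = π ^ ((σ - 1) / 2) * A / (π ^ (-(σ / 2)) * G) := by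
    rw [gammaRFactor, norm_div, GammaR, GammaR, norm_mul, norm_mul,
      Complex.norm_cpow_eq_rpow_re_of_pos hπ, Complex.norm_cpow_eq_rpow_re_of_pos hπ,
      hre1, hre2, ← hA_def, ← hG_def]
  set K : ℝ := π ^ ((σ - 1) / 2) * π ^ (σ / 2) / π with hK_def
  have hK_pos : 0 < K := by positivity
  have hgr2 : gammaRFactor s = K * (A * B * S) := by
    rw [hgr, hG_eq, Real.rpow_neg hπ.le, hK_def]
    field_simp
  -- constant identity
  have h2σ : Real.sqrt 2 * (2 : ℝ) ^ (σ - 1 / 2) = (2 : ℝ) ^ σ := by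
    rw [Real.sqrt_eq_rpow, ← Real.rpow_add two_pos]
    norm_num
  have hπσ : (π : ℝ) ^ ((σ - 1) / 2) * π ^ (σ / 2) = π ^ (σ - 1 / 2) := by
    rw [← Real.rpow_add hπ, show (σ - 1) / 2 + σ / 2 = σ - 1 / 2 by ring]
  have hππ : Real.sqrt π * Real.sqrt π = π := Real.mul_self_sqrt hπ.le
  have hK_eq : Real.sqrt 2 * ((2 * π) ^ (σ - 1 / 2) / Real.sqrt π) = K * ((2 : ℝ) ^ σ * Real.sqrt π) := by
    have hsπ : Real.sqrt π ≠ 0 := (Real.sqrt_pos.mpr hπ).ne'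
    rw [hK_def, hπσ, Real.mul_rpow two_pos.le hπ.le]
    field_simp
    rw [show ((σ * 2 - 1) / 2 : ℝ) = σ - 1 / 2 by ring]
    linear_combination π * h2σ - (2:ℝ) ^ σ * hππ
  calc Real.sqrt 2 * ((2 * π) ^ (σ - 1/2) / Real.sqrt π) * Real.Gamma (1 - σ) *
        |Real.tanh (π * τ / 2)|
      = K * ((2 : ℝ) ^ σ * Real.sqrt π * Real.Gamma (1 - σ) * |Real.tanh (π * τ / 2)|) := by
        rw [hK_eq]; ring
    _ ≤ K * (A * B * S) := by
        apply mul_le_mul_of_nonneg_left hprod hK_pos.le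
    _ = gammaRFactor s := hgr2.symm
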